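/- The Magnus map μ from the free group F on generators x₁,…,xₙ into the ring ℤ[[X₁,…,Xₙ]] of formal power series in non-commuting variables, defined by μ(xᵢ) = 1 + Xᵢ and μ(xᵢ⁻¹) = 1 − Xᵢ + Xᵢ² − ⋯, is an injective group homomorphism into the group of power series with constant term 1. -/

import Mathlib

/-- The ring `ℤ[[X₁, …, Xₙ]]` of formal power series in `n` non-commuting variables:
a series is a `ℤ`-valued function on monomials, i.e. on words in the `n` variables. -/
def NCSeries (n : ℕ) : Type := List (Fin n) → ℤ

namespace NCSeries

/-- The coefficient of the monomial (word) `w` in the series `f`. -/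
def coeff {n : ℕ} (f : NCSeries n) (w : List (Fin n)) : ℤ := f w

instance instZero (n : ℕ) : Zero (NCSeries n) := ⟨fun _ => 0⟩

instance instOne (n : ℕ) : One (NCSeries n) := ⟨fun w => if w = [] then 1 else 0⟩

instance instAdd (n : ℕ) : Add (NCSeries n) := ⟨fun f g => fun w => f w + g w⟩

instance instNeg (n : ℕ) : Neg (NCSeries n) := ⟨fun f => fun w => -f w⟩

/-- Convolution (Cauchy) product: sum over all splittings of a monomial. -/
instance instMul (n : ℕ) : Mul (NCSeries n) :=
  ⟨fun f g => fun w =>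
    ∑ i ∈ Finset.range (w.length + 1), f (w.take i) * g (w.drop i)⟩

/-- Ring structure on non-commutative power series. -/
instance instRing (n : ℕ) : Ring (NCSeries n) where
  add_assoc f g h := funext fun _ => add_assoc _ _ _
  zero_add f := funext fun _ => zero_add _
  add_zero f := funext fun _ => add_zero _
  add_comm f g := funext fun _ => add_comm _ _
  neg_add_cancel f := funext fun _ => neg_add_cancel _
  nsmul := nsmulRec
  zsmul := zsmulRec
  mul_assoc f g h := funext fun w => by
    show (∑ j ∈ Finset.range (w.length + 1),
        (∑ i ∈ Finset.range ((w.take j).length + 1),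
          f ((w.take j).take i) * g ((w.take j).drop i)) * h (w.drop j))
      = ∑ i ∈ Finset.range (w.length + 1),
          f (w.take i) * ∑ k ∈ Finset.range ((w.drop i).length + 1),
            g ((w.drop i).take k) * h ((w.drop i).drop k)
    have L1 : (∑ j ∈ Finset.range (w.length + 1),
        (∑ i ∈ Finset.range ((w.take j).length + 1),
          f ((w.take j).take i) * g ((w.take j).drop i)) * h (w.drop j))
        = ∑ j ∈ Finset.range (w.length + 1), ∑ i ∈ Finset.range (j + 1),
            f (w.take i) * g ((w.drop i).take (j - i)) * h (w.drop j) := by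
      refine Finset.sum_congr rfl fun j hj => ?_
      simp only [Finset.mem_range, Nat.lt_succ_iff] at hj
      rw [Finset.sum_mul, List.length_take, Nat.min_eq_left hj]
      refine Finset.sum_congr rfl fun i hi => ?_
      simp only [Finset.mem_range, Nat.lt_succ_iff] at hi
      rw [List.take_take, Nat.min_eq_left hi, List.drop_take]
    have R1 : (∑ i ∈ Finset.range (w.length + 1),
        f (w.take i) * ∑ k ∈ Finset.range ((w.drop i).length + 1),
          g ((w.drop i).take k) * h ((w.drop i).drop k))
        = ∑ i ∈ Finset.range (w.length + 1), ∑ k ∈ Finset.range (w.length - i + 1),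
            f (w.take i) * g ((w.drop i).take k) * h (w.drop (i + k)) := by
      refine Finset.sum_congr rfl fun i hi => ?_
      rw [Finset.mul_sum, List.length_drop]
      refine Finset.sum_congr rfl fun k hk => ?_
      rw [List.drop_drop, mul_assoc]
    rw [L1, R1, Finset.sum_sigma', Finset.sum_sigma']
    refine Finset.sum_nbij' (fun p => ⟨p.2, p.1 - p.2⟩) (fun q => ⟨q.1 + q.2, q.1⟩)
      ?_ ?_ ?_ ?_ ?_
    · rintro ⟨j, i⟩ hp
      simp only [Finset.mem_sigma, Finset.mem_range, Nat.lt_succ_iff] at hp ⊢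
      omega
    · rintro ⟨i, k⟩ hq
      simp only [Finset.mem_sigma, Finset.mem_range, Nat.lt_succ_iff] at hq ⊢
      omega
    · rintro ⟨j, i⟩ hp
      simp only [Finset.mem_sigma, Finset.mem_range, Nat.lt_succ_iff] at hp
      have h1 : i + (j - i) = j := by omega
      simp [h1]
    · rintro ⟨i, k⟩ hq
      simp only [Finset.mem_sigma, Finset.mem_range, Nat.lt_succ_iff] at hq
      have h1 : i + k - i = k := by omega
      simp [h1]
    · rintro ⟨j, i⟩ hp
      simp only [Finset.mem_sigma, Finset.mem_range, Nat.lt_succ_iff] at hp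
      have : i + (j - i) = j := by omega
      simp [this]
  one_mul f := funext fun w => by
    show (∑ i ∈ Finset.range (w.length + 1),
        (if w.take i = [] then (1 : ℤ) else 0) * f (w.drop i)) = f w
    rw [Finset.sum_eq_single 0]
    · simp
    · intro b hb hb0
      simp only [Finset.mem_range, Nat.lt_succ_iff] at hb
      have hne : ¬w.take b = [] := by
        rw [List.take_eq_nil_iff]
        rintro (rfl | rfl)
        · exact hb0 rfl
        · exact hb0 (Nat.le_zero.mp hb)
      simp [hne]
    · simp
  mul_one f := funext fun w => by
    show (∑ i ∈ Finset.range (w.length + 1),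
        f (w.take i) * (if w.drop i = [] then (1 : ℤ) else 0)) = f w
    rw [Finset.sum_eq_single w.length] <;>
      simp +contextual [List.drop_eq_nil_iff, Nat.lt_succ_iff]
    omega
  left_distrib f g h := funext fun w => by
    show (∑ i ∈ Finset.range (w.length + 1),
        f (w.take i) * (g (w.drop i) + h (w.drop i))) = _
    simp only [mul_add]
    exact Finset.sum_add_distrib
  right_distrib f g h := funext fun w => by
    show (∑ i ∈ Finset.range (w.length + 1),
        (f (w.take i) + g (w.take i)) * h (w.drop i)) = _
    simp only [add_mul]
    exact Finset.sum_add_distrib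
  zero_mul f := funext fun w => by
    show (∑ i ∈ Finset.range (w.length + 1), (0 : ℤ) * f (w.drop i)) = 0
    simp
  mul_zero f := funext fun w => by
    show (∑ i ∈ Finset.range (w.length + 1), f (w.take i) * (0 : ℤ)) = 0
    simp

/-- The variable `Xᵢ`, as a power series. -/
def X {n : ℕ} (i : Fin n) : NCSeries n := fun w => if w = [i] then 1 else 0

/-- The geometric series `1 - Xᵢ + Xᵢ² - Xᵢ³ + ⋯`, inverse of `1 + Xᵢ`. -/
def geom {n : ℕ} (i : Fin n) : NCSeries n :=
  fun w => if w.all (· = i) then (-1) ^ w.length else 0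

/-- `1 + Xᵢ` as a unit of `ℤ[[X₁, …, Xₙ]]`, with inverse `1 - Xᵢ + Xᵢ² - ⋯`. -/
def magnusUnit {n : ℕ} (i : Fin n) : (NCSeries n)ˣ where
  val := 1 + X i
  inv := geom i
  val_inv := funext fun w => by
    show (∑ k ∈ Finset.range (w.length + 1),
        ((if w.take k = [] then (1 : ℤ) else 0) + (if w.take k = [i] then 1 else 0)) *
          (if (w.drop k).all (· = i) then (-1) ^ (w.drop k).length else 0))
      = if w = [] then 1 else 0
    simp only [add_mul]
    rw [Finset.sum_add_distrib]
    have hA : (∑ k ∈ Finset.range (w.length + 1),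
        (if w.take k = [] then (1 : ℤ) else 0) *
          (if (w.drop k).all (· = i) then (-1) ^ (w.drop k).length else 0))
        = if w.all (· = i) then (-1) ^ w.length else 0 := by
      rw [Finset.sum_eq_single 0]
      · simp
      · intro b hb hb0
        simp only [Finset.mem_range, Nat.lt_succ_iff] at hb
        have hne : ¬w.take b = [] := by
          rw [List.take_eq_nil_iff]
          rintro (rfl | rfl)
          · exact hb0 rfl
          · exact hb0 (Nat.le_zero.mp hb)
        simp [hne]
      · simp
    rw [hA]
    cases w with
    | nil => simp
    | cons a t =>
      have hB : (∑ k ∈ Finset.range ((a :: t).length + 1),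
          (if (a :: t).take k = [i] then (1 : ℤ) else 0) *
            (if ((a :: t).drop k).all (· = i) then (-1) ^ ((a :: t).drop k).length else 0))
          = (if a = i then (1 : ℤ) else 0) *
              (if t.all (· = i) then (-1) ^ t.length else 0) := by
        rw [Finset.sum_eq_single 1]
        · simp only [List.take_succ_cons, List.take_zero, List.drop_succ_cons,
            List.drop_zero]
          congr 1
          by_cases ha : a = i <;> simp [ha]
        · intro b hb hb1
          simp only [Finset.mem_range, Nat.lt_succ_iff] at hb
          have hne : ¬(a :: t).take b = [i] := by
            intro hEq
            have : ((a :: t).take b).length = 1 := by rw [hEq]; rfl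
            rw [List.length_take] at this
            omega
          simp [hne]
        · simp
      rw [hB]
      by_cases ha : a = i <;> by_cases ht : t.all (· = i) <;>
        simp [ha, ht, List.all_cons, pow_succ]
  inv_val := funext fun w => by
    show (∑ k ∈ Finset.range (w.length + 1),
        (if (w.take k).all (· = i) then (-1 : ℤ) ^ (w.take k).length else 0) *
          ((if w.drop k = [] then (1 : ℤ) else 0) + (if w.drop k = [i] then 1 else 0)))
      = if w = [] then 1 else 0
    simp only [mul_add]
    rw [Finset.sum_add_distrib]
    have hA : (∑ k ∈ Finset.range (w.length + 1),
        (if (w.take k).all (· = i) then (-1 : ℤ) ^ (w.take k).length else 0) *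
          (if w.drop k = [] then (1 : ℤ) else 0))
        = if w.all (· = i) then (-1) ^ w.length else 0 := by
      rw [Finset.sum_eq_single w.length]
      · simp
      · intro b hb hb0
        simp only [Finset.mem_range, Nat.lt_succ_iff] at hb
        have hne : ¬w.drop b = [] := by
          rw [List.drop_eq_nil_iff]
          omega
        simp [hne]
      · simp
    rw [hA]
    induction w using List.reverseRecOn with
    | nil => simp
    | append_singleton u a _ =>
      have hB : (∑ k ∈ Finset.range ((u ++ [a]).length + 1),
          (if ((u ++ [a]).take k).all (· = i) then (-1 : ℤ) ^ ((u ++ [a]).take k).length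
            else 0) *
            (if (u ++ [a]).drop k = [i] then (1 : ℤ) else 0))
          = (if u.all (· = i) then (-1 : ℤ) ^ u.length else 0) *
              (if a = i then (1 : ℤ) else 0) := by
        rw [Finset.sum_eq_single u.length]
        · rw [List.take_left, List.drop_left]
          congr 1
          by_cases ha : a = i <;> simp [ha]
        · intro b hb hb1
          simp only [Finset.mem_range, Nat.lt_succ_iff] at hb
          have hne : ¬(u ++ [a]).drop b = [i] := by
            intro hEq
            have : ((u ++ [a]).drop b).length = 1 := by rw [hEq]; rfl
            rw [List.length_drop, List.length_append] at this
            simp only [List.length_singleton] at this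
            simp only [List.length_append, List.length_singleton] at hb
            omega
          simp [hne]
        · intro h
          exact absurd (Finset.mem_range.mpr (by simp)) h
      rw [hB]
      by_cases ha : a = i <;> by_cases hu : u.all (· = i) <;>
        simp [ha, hu, List.all_append, pow_succ]

/-- The Magnus map `μ : Fₙ → ℤ[[X₁, …, Xₙ]]`, the group homomorphism determined by
`μ(xᵢ) = 1 + Xᵢ` (so `μ(xᵢ⁻¹) = 1 - Xᵢ + Xᵢ² - ⋯`), valued in the units of the ring. -/
def magnus (n : ℕ) : FreeGroup (Fin n) →* (NCSeries n)ˣ :=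
  FreeGroup.lift magnusUnit

end NCSeries


namespace NCSeries

variable {n : ℕ}

lemma mul_apply (f g : NCSeries n) (w : List (Fin n)) :
    (f * g) w = ∑ i ∈ Finset.range (w.length + 1), f (w.take i) * g (w.drop i) := rfl

lemma one_apply (w : List (Fin n)) : (1 : NCSeries n) w = if w = [] then 1 else 0 := rfl

lemma add_apply (f g : NCSeries n) (w : List (Fin n)) : (f + g) w = f w + g w := rfl

lemma mul_nil (f g : NCSeries n) : (f * g) [] = f [] * g [] := by
  simp [mul_apply]

lemma mul_single (f g : NCSeries n) (a : Fin n) :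
    (f * g) [a] = f [] * g [a] + f [a] * g [] := by
  simp [mul_apply, Finset.sum_range_succ]

/-- `f` is supported on powers of the letter `i`. -/
def Supp (i : Fin n) (f : NCSeries n) : Prop := ∀ w, f w ≠ 0 → ∀ a ∈ w, a = i

lemma supp_one (i : Fin n) : Supp i (1 : NCSeries n) := by
  intro w hw a ha
  rw [one_apply] at hw
  split at hw
  · subst ‹w = []›; simp at ha
  · simp at hw

lemma supp_mul {i : Fin n} {f g : NCSeries n} (hf : Supp i f) (hg : Supp i g) :
    Supp i (f * g) := by
  intro w hw a ha
  rw [mul_apply] at hw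
  obtain ⟨k, _, hne⟩ := Finset.exists_ne_zero_of_sum_ne_zero hw
  have h1 : f (w.take k) ≠ 0 := fun h => hne (by simp [h])
  have h2 : g (w.drop k) ≠ 0 := fun h => hne (by simp [h])
  rw [← List.take_append_drop k w] at ha
  rcases List.mem_append.mp ha with h | h
  · exact hf _ h1 a h
  · exact hg _ h2 a h

lemma supp_pow {i : Fin n} {f : NCSeries n} (hf : Supp i f) (m : ℕ) : Supp i (f ^ m) := by
  induction m with
  | zero => simpa using supp_one i
  | succ m ih => rw [pow_succ]; exact supp_mul ih hf

lemma pow_nil {f : NCSeries n} (hf : f [] = 1) (m : ℕ) : (f ^ m) [] = 1 := by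
  induction m with
  | zero => simp [one_apply]
  | succ m ih => rw [pow_succ, mul_nil, ih, hf, one_mul]

lemma pow_single {f : NCSeries n} (hf : f [] = 1) (m : ℕ) (a : Fin n) :
    (f ^ m) [a] = m * f [a] := by
  induction m with
  | zero => simp [one_apply]
  | succ m ih =>
    rw [pow_succ, mul_single, ih, pow_nil hf, hf]
    push_cast
    ring

lemma magnusUnit_val (i : Fin n) : ((magnusUnit i : (NCSeries n)ˣ) : NCSeries n) = 1 + X i := rfl

lemma magnusUnit_inv_val (i : Fin n) :
    (((magnusUnit i)⁻¹ : (NCSeries n)ˣ) : NCSeries n) = geom i := rfl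

lemma supp_base (i : Fin n) : Supp i ((magnusUnit i : (NCSeries n)ˣ) : NCSeries n) := by
  intro w hw a ha
  rw [magnusUnit_val] at hw
  have : (if w = [] then (1:ℤ) else 0) + (if w = [i] then 1 else 0) ≠ 0 := hw
  by_cases h0 : w = []
  · subst h0; simp at ha
  by_cases h1 : w = [i]
  · subst h1; simpa using ha
  · simp [h0, h1] at this

lemma supp_geom (i : Fin n) : Supp i (geom i) := by
  intro w hw a ha
  have : (if w.all (· = i) then ((-1:ℤ)) ^ w.length else 0) ≠ 0 := hw
  by_cases h : w.all (· = i)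
  · have := List.all_eq_true.mp h a ha
    simpa using this
  · simp [h] at this

lemma base_nil (i : Fin n) : ((magnusUnit i : (NCSeries n)ˣ) : NCSeries n) [] = 1 := by
  rw [magnusUnit_val]
  show (if ([]:List (Fin n)) = [] then (1:ℤ) else 0) + (if ([]:List (Fin n)) = [i] then 1 else 0) = 1
  simp

lemma base_single (i : Fin n) : ((magnusUnit i : (NCSeries n)ˣ) : NCSeries n) [i] = 1 := by
  rw [magnusUnit_val]
  show (if ([i]:List (Fin n)) = [] then (1:ℤ) else 0) + (if [i] = [i] then (1:ℤ) else 0) = 1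
  simp

lemma geom_nil (i : Fin n) : geom i ([] : List (Fin n)) = 1 := by simp [geom]

lemma geom_single (i : Fin n) : geom i [i] = -1 := by simp [geom]

/-- The series underlying an integer power of the Magnus unit. -/
lemma zpow_val (i : Fin n) (e : ℤ) :
    ((magnusUnit i ^ e : (NCSeries n)ˣ) : NCSeries n)
      = (if 0 ≤ e then ((magnusUnit i : (NCSeries n)ˣ) : NCSeries n) ^ e.toNat
         else geom i ^ (-e).toNat) := by
  rcases e with m | m
  · simp [zpow_natCast, Units.val_pow_eq_pow_val]
  · rw [zpow_negSucc, ← inv_pow, if_neg (by simp)]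
    rw [← magnusUnit_inv_val, Units.val_pow_eq_pow_val]
    congr 1

lemma supp_zpow (i : Fin n) (e : ℤ) :
    Supp i ((magnusUnit i ^ e : (NCSeries n)ˣ) : NCSeries n) := by
  rw [zpow_val]
  split
  · exact supp_pow (supp_base i) _
  · exact supp_pow (supp_geom i) _

lemma zpow_nil (i : Fin n) (e : ℤ) :
    ((magnusUnit i ^ e : (NCSeries n)ˣ) : NCSeries n) [] = 1 := by
  rw [zpow_val]
  split
  · exact pow_nil (base_nil i) _
  · exact pow_nil (geom_nil i) _

lemma zpow_single (i : Fin n) (e : ℤ) :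
    ((magnusUnit i ^ e : (NCSeries n)ˣ) : NCSeries n) [i] = e := by
  rw [zpow_val]
  split
  · rw [pow_single (base_nil i), base_single]
    omega
  · rw [pow_single (geom_nil i), geom_single]
    omega

lemma supp_take_eq_zero {i : Fin n} {f : NCSeries n} (hf : Supp i f) {w : List (Fin n)} {k : ℕ}
    (hw : w.Chain' (· ≠ ·)) (h2 : 2 ≤ k) (hk : k ≤ w.length) : f (w.take k) = 0 := by
  by_contra h
  have hall := hf _ h
  obtain ⟨k, rfl⟩ : ∃ k', k = k' + 2 := ⟨k - 2, by omega⟩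
  match w, hk with
  | a :: b :: t, _ =>
    have ha : a = i := hall a (by simp)
    have hb : b = i := hall b (by simp)
    exact (List.isChain_cons_cons.mp hw).1 (ha.trans hb.symm)

lemma prod_vanish (l : List (Fin n × ℤ)) (w : List (Fin n)) (hw : w.Chain' (· ≠ ·))
    (hlen : l.length < w.length) :
    (((l.map fun p => (magnusUnit p.1 ^ p.2 : (NCSeries n)ˣ)).prod : (NCSeries n)ˣ) :
      NCSeries n) w = 0 := by
  induction l generalizing w with
  | nil =>
    simp only [List.map_nil, List.prod_nil, Units.val_one, one_apply]
    rw [if_neg]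
    intro h; subst h; simp at hlen
  | cons p t ih =>
    rw [List.map_cons, List.prod_cons, Units.val_mul, mul_apply]
    apply Finset.sum_eq_zero
    intro k hk
    rw [Finset.mem_range, Nat.lt_succ_iff] at hk
    by_cases h2 : 2 ≤ k
    · rw [supp_take_eq_zero (supp_zpow p.1 p.2) hw h2 hk, zero_mul]
    · rw [ih (w.drop k) (hw.drop k) (by simp at hlen ⊢; omega), mul_zero]

lemma prod_coeff (l : List (Fin n × ℤ)) (hc : (l.map Prod.fst).Chain' (· ≠ ·)) :
    (((l.map fun p => (magnusUnit p.1 ^ p.2 : (NCSeries n)ˣ)).prod : (NCSeries n)ˣ) :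
      NCSeries n) (l.map Prod.fst) = (l.map Prod.snd).prod := by
  induction l with
  | nil => simp [one_apply]
  | cons p t ih =>
    rw [List.map_cons, List.prod_cons, Units.val_mul, List.map_cons, mul_apply]
    rw [Finset.sum_eq_single 1]
    · simp only [List.take_succ_cons, List.take_zero, List.drop_succ_cons, List.drop_zero]
      rw [zpow_single, ih (List.isChain_cons.mp hc).2, List.map_cons, List.prod_cons]
    · intro b hb hb1
      rw [Finset.mem_range, Nat.lt_succ_iff] at hb
      rcases Nat.lt_or_ge b 2 with h2 | h2
      · interval_cases b
        · rw [List.take_zero, List.drop_zero, zpow_nil, one_mul]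
          exact prod_vanish t _ hc (by simp)
        · omega
      · rw [supp_take_eq_zero (supp_zpow p.1 p.2) (w := p.1 :: t.map Prod.fst)
          (by simpa using hc) h2 (by simpa using hb), zero_mul]
    · intro h
      exact absurd (Finset.mem_range.mpr (by simp)) h

/-- Sign of a letter in a free-group word. -/
def eps (b : Bool) : ℤ := if b then 1 else -1

lemma eps_ne_zero (b : Bool) : eps b ≠ 0 := by cases b <;> simp [eps]

/-- Run-length encoding of a word into blocks `xᵢ^e`. -/
def blockify : List (Fin n × Bool) → List (Fin n × ℤ)
  | [] => []
  | (i, b) :: t =>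
    match blockify t with
    | [] => [(i, eps b)]
    | (j, e) :: r => if i = j then (i, eps b + e) :: r else (i, eps b) :: (j, e) :: r

lemma reduce_chain' (L : List (Fin n × Bool)) :
    (FreeGroup.reduce L).Chain' (fun p q => ¬(p.1 = q.1 ∧ p.2 = !q.2)) := by
  induction L with
  | nil => exact List.isChain_nil
  | cons x L ih =>
    rw [FreeGroup.reduce.cons]
    cases r : FreeGroup.reduce L with
    | nil => exact List.isChain_singleton _
    | cons hd tl =>
      rw [r] at ih
      dsimp only
      split_ifs with h
      · exact ih.tail
      · exact List.isChain_cons_cons.mpr ⟨h, ih⟩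

lemma blockify_cons (i : Fin n) (b : Bool) (t : List (Fin n × Bool)) :
    blockify ((i, b) :: t)
      = match blockify t with
        | [] => [(i, eps b)]
        | (j, e) :: r => if i = j then (i, eps b + e) :: r else (i, eps b) :: (j, e) :: r := rfl

lemma blockify_spec : ∀ L : List (Fin n × Bool),
    L.Chain' (fun p q => ¬(p.1 = q.1 ∧ p.2 = !q.2)) →
    ((blockify L).map Prod.fst).Chain' (· ≠ ·) ∧ (∀ p ∈ blockify L, p.2 ≠ 0) ∧
      ∀ i b t, L = (i, b) :: t →
        ∃ e r, blockify L = (i, e) :: r ∧ (if b then 0 < e else e < 0)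
  | [], _ => by simp [blockify]; exact List.isChain_nil
  | (i, b) :: L, hc => by
    obtain ⟨h1, h2, h3⟩ := blockify_spec L hc.tail
    cases hL : blockify L with
    | nil =>
      have hbl : blockify ((i, b) :: L) = [(i, eps b)] := by rw [blockify_cons, hL]
      refine ⟨by simp [hbl]; exact List.isChain_singleton _, by simp [hbl, eps_ne_zero], ?_⟩
      intro i' b' t' heq
      injection heq with hp ht
      obtain ⟨rfl, rfl⟩ := Prod.mk.inj hp
      exact ⟨eps b, [], hbl, by cases b <;> simp [eps]⟩
    | cons q r =>
      obtain ⟨j, e⟩ := q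
      cases L with
      | nil => simp [blockify] at hL
      | cons p t =>
        obtain ⟨j2, c⟩ := p
        obtain ⟨e2, r2, hbl', hsign⟩ := h3 j2 c t rfl
        rw [hL] at hbl'
        injection hbl' with hq hr
        injection hq with hq1 hq2
        subst hq1 hq2 hr
        have hcc : ¬(i = j ∧ b = !c) := (List.isChain_cons_cons.mp hc).1
        rw [hL] at h1 h2
        by_cases hij : i = j
        · subst hij
          have hbc : b = c := by
            rcases b <;> rcases c <;> simp_all
          subst hbc
          have hbl : blockify ((i, b) :: (i, b) :: t) = (i, eps b + e) :: r := by
            rw [blockify_cons, hL]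
            simp
          have hsign' : if b then 0 < eps b + e else eps b + e < 0 := by
            cases b <;> simp [eps] at hsign ⊢ <;> omega
          refine ⟨?_, ?_, ?_⟩
          · rw [hbl]; simpa using h1
          · intro p hp
            rw [hbl] at hp
            rcases List.mem_cons.mp hp with rfl | hp
            · cases b <;> simp at hsign' <;> omega
            · exact h2 p (List.mem_cons_of_mem _ hp)
          · intro i' b' t' heq
            injection heq with hp2 ht2
            obtain ⟨rfl, rfl⟩ := Prod.mk.inj hp2
            exact ⟨eps b + e, r, hbl, hsign'⟩
        · have hbl : blockify ((i, b) :: (j, c) :: t) = (i, eps b) :: (j, e) :: r := by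
            rw [blockify_cons, hL]
            simp [hij]
          refine ⟨?_, ?_, ?_⟩
          · rw [hbl, List.map_cons]
            exact List.isChain_cons_cons.mpr ⟨hij, h1⟩
          · intro p hp
            rw [hbl] at hp
            rcases List.mem_cons.mp hp with rfl | hp
            · exact eps_ne_zero b
            · exact h2 p hp
          · intro i' b' t' heq
            injection heq with hp2 ht2
            obtain ⟨rfl, rfl⟩ := Prod.mk.inj hp2
            exact ⟨eps b, (j, e) :: r, hbl, by cases b <;> simp [eps]⟩

lemma blockify_prod : ∀ L : List (Fin n × Bool),
    ((blockify L).map fun p => (magnusUnit p.1 ^ p.2 : (NCSeries n)ˣ)).prod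
      = (L.map fun p => (magnusUnit p.1 ^ eps p.2 : (NCSeries n)ˣ)).prod
  | [] => rfl
  | (i, b) :: L => by
    have ih := blockify_prod L
    rw [List.map_cons, List.prod_cons, ← ih]
    cases hL : blockify L with
    | nil =>
      have hbl : blockify ((i, b) :: L) = [(i, eps b)] := by rw [blockify_cons, hL]
      rw [hbl]
      simp
    | cons q r =>
      obtain ⟨j, e⟩ := q
      by_cases hij : i = j
      · subst hij
        have hbl : blockify ((i, b) :: L) = (i, eps b + e) :: r := by
          rw [blockify_cons, hL]
          simp
        rw [hbl, List.map_cons, List.prod_cons, List.map_cons, List.prod_cons,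
          zpow_add, mul_assoc]
      · have hbl : blockify ((i, b) :: L) = (i, eps b) :: (j, e) :: r := by
          rw [blockify_cons, hL]
          simp [hij]
        rw [hbl, List.map_cons, List.prod_cons]
lemma magnus_toWord (g : FreeGroup (Fin n)) :
    magnus n g
      = ((blockify g.toWord).map fun p => (magnusUnit p.1 ^ p.2 : (NCSeries n)ˣ)).prod := by
  conv_lhs => rw [← FreeGroup.mk_toWord (x := g)]
  rw [magnus, FreeGroup.lift_mk, blockify_prod]
  refine congrArg List.prod (List.map_congr_left fun x _ => ?_).symm
  obtain ⟨i, b⟩ := x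
  cases b
  · show (magnusUnit i : (NCSeries n)ˣ) ^ eps false = (magnusUnit i)⁻¹
    rw [show eps false = -1 from rfl, zpow_neg, zpow_one]
  · show (magnusUnit i : (NCSeries n)ˣ) ^ eps true = magnusUnit i
    rw [show eps true = 1 from rfl, zpow_one]

end NCSeries

/-- The Magnus map is an injective group homomorphism from the free group into the
multiplicative group `{1 + O(1)}` of power series with constant term `1`. -/
theorem magnus_injective_and_constantCoeff_one (n : ℕ) :
    Function.Injective (NCSeries.magnus n) ∧
    ∀ f : FreeGroup (Fin n),
      NCSeries.coeff ((NCSeries.magnus n f : (NCSeries n)ˣ) : NCSeries n) [] = 1 := by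
  constructor
  · rw [injective_iff_map_eq_one]
    intro g hg
    by_contra hne
    have hL : g.toWord ≠ [] := fun h => hne (FreeGroup.toWord_eq_nil_iff.mp h)
    have hred : g.toWord.Chain' (fun p q => ¬(p.1 = q.1 ∧ p.2 = !q.2)) := by
      rw [← FreeGroup.reduce_toWord g]
      exact NCSeries.reduce_chain' _
    obtain ⟨h1, h2, h3⟩ := NCSeries.blockify_spec g.toWord hred
    obtain ⟨⟨i, b⟩, t, hLt⟩ : ∃ p t, g.toWord = p :: t := by
      cases h : g.toWord with
      | nil => exact absurd h hL
      | cons p t => exact ⟨p, t, rfl⟩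
    obtain ⟨e, r, hbl, -⟩ := h3 i b t hLt
    have hcoeff := NCSeries.prod_coeff (NCSeries.blockify g.toWord) h1
    rw [← NCSeries.magnus_toWord, hg, Units.val_one, NCSeries.one_apply,
      if_neg (by simp [hbl])] at hcoeff
    have hnz : ((NCSeries.blockify g.toWord).map Prod.snd).prod ≠ 0 := by
      apply List.prod_ne_zero
      intro h0
      obtain ⟨p, hp, hp0⟩ := List.mem_map.mp h0
      exact h2 p hp hp0
    exact hnz hcoeff.symm
  · intro f
    induction f using FreeGroup.induction_on with
    | C1 => rw [map_one, Units.val_one]; rfl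
    | of x =>
      show ((NCSeries.magnus n (FreeGroup.of x) : (NCSeries n)ˣ) : NCSeries n) [] = 1
      rw [NCSeries.magnus, FreeGroup.lift_apply_of]
      exact NCSeries.base_nil x
    | inv_of x _ =>
      show ((NCSeries.magnus n (FreeGroup.of x)⁻¹ : (NCSeries n)ˣ) : NCSeries n) [] = 1
      rw [map_inv, NCSeries.magnus, FreeGroup.lift_apply_of, NCSeries.magnusUnit_inv_val]
      exact NCSeries.geom_nil x
    | mul x y hx hy =>
      show ((NCSeries.magnus n (x * y) : (NCSeries n)ˣ) : NCSeries n) [] = 1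
      rw [map_mul, Units.val_mul, NCSeries.mul_nil]
      rw [show ((NCSeries.magnus n x : (NCSeries n)ˣ) : NCSeries n) [] = 1 from hx,
        show ((NCSeries.magnus n y : (NCSeries n)ˣ) : NCSeries n) [] = 1 from hy, one_mul]
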